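/- arXiv:1510.05436 — 2 statements merged into one kernel-verified Lean document; each statement's English description precedes it below -/
import Mathlib

section
/- Let L be a symmetric PSD matrix with eigenvalues in [0, λ_max]. Suppose the kernels satisfy the frame condition G(λ) := h(λ)² + Σ_{τ=1}^{J} g(t_τ λ)² ≥ c > 0 for all λ ∈ [0, λ_max]. Then the SGWT analysis operator W f = (h(L)f, g(t_1 L)f, …, g(t_J L)f) satisfies ‖Wf‖² = Σ components' squared norms ≥ c ‖f‖², hence W is injective and the transform is invertible. -/
open Matrix

/-- Functional calculus applied to a signal, given the spectral data. -/
def specApply {N : ℕ} (lam : Fin N → ℝ) (chi : Fin N → Fin N → ℝ)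
    (φ : ℝ → ℝ) (f : Fin N → ℝ) : Fin N → ℝ :=
  fun n => ∑ l, φ (lam l) * (chi l ⬝ᵥ f) * chi l n

lemma orth_sum {N : ℕ} (chi : Fin N → Fin N → ℝ)
    (horth : ∀ i j, chi i ⬝ᵥ chi j = if i = j then (1:ℝ) else 0)
    (a : Fin N → ℝ) :
    ∑ n, (∑ l, a l * chi l n)^2 = ∑ l, (a l)^2 := by
  have key : ∑ n, (∑ l, a l * chi l n)^2
      = ∑ l, ∑ k, (a l * a k) * (chi l ⬝ᵥ chi k) := by
    simp_rw [dotProduct, Finset.mul_sum, sq, Finset.sum_mul_sum]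
    rw [Finset.sum_comm]
    refine Finset.sum_congr rfl fun l _ => ?_
    rw [Finset.sum_comm]
    exact Finset.sum_congr rfl fun k _ => Finset.sum_congr rfl fun n _ => by ring
  rw [key]
  simp [horth, sq]

lemma dual_orth {N : ℕ} (chi : Fin N → Fin N → ℝ)
    (horth : ∀ i j, chi i ⬝ᵥ chi j = if i = j then (1:ℝ) else 0) :
    ∀ n m, (∑ l, chi l n * chi l m) = if n = m then (1:ℝ) else 0 := by
  have h1 : (Matrix.of chi) * (Matrix.of chi)ᵀ = 1 := by
    ext i j
    simp [Matrix.mul_apply, Matrix.one_apply, ← horth i j, dotProduct]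
  have h2 : (Matrix.of chi)ᵀ * (Matrix.of chi) = 1 := mul_eq_one_comm.mp h1
  intro n m
  have := congrFun (congrFun h2 n) m
  simpa [Matrix.mul_apply, Matrix.one_apply] using this

lemma parseval {N : ℕ} (chi : Fin N → Fin N → ℝ)
    (horth : ∀ i j, chi i ⬝ᵥ chi j = if i = j then (1:ℝ) else 0)
    (f : Fin N → ℝ) :
    ∑ l, (chi l ⬝ᵥ f)^2 = ∑ n, f n ^ 2 := by
  have key : ∑ l, (chi l ⬝ᵥ f)^2
      = ∑ n, ∑ m, (f n * f m) * (∑ l, chi l n * chi l m) := by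
    simp_rw [dotProduct, sq, Finset.sum_mul_sum, Finset.mul_sum]
    rw [Finset.sum_comm]
    refine Finset.sum_congr rfl fun n _ => ?_
    rw [Finset.sum_comm]
    exact Finset.sum_congr rfl fun m _ => Finset.sum_congr rfl fun l _ => by ring
  rw [key]
  simp [dual_orth chi horth, sq]

lemma spec_norm {N : ℕ} (lam : Fin N → ℝ) (chi : Fin N → Fin N → ℝ)
    (horth : ∀ i j, chi i ⬝ᵥ chi j = if i = j then (1:ℝ) else 0)
    (φ : ℝ → ℝ) (f : Fin N → ℝ) :
    ∑ n, (specApply lam chi φ f n)^2 = ∑ l, (φ (lam l))^2 * (chi l ⬝ᵥ f)^2 := by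
  have := orth_sum chi horth (fun l => φ (lam l) * (chi l ⬝ᵥ f))
  simp only [specApply]
  rw [this]
  exact Finset.sum_congr rfl fun l _ => by ring

theorem sgwt_frame_lower_bound_and_injective {N J : ℕ}
    (lam : Fin N → ℝ) (chi : Fin N → Fin N → ℝ)
    (horth : ∀ i j, chi i ⬝ᵥ chi j = if i = j then (1 : ℝ) else 0)
    (lamMax : ℝ)
    (hspec : ∀ l, lam l ∈ Set.Icc (0 : ℝ) lamMax)
    (h g : ℝ → ℝ) (t : Fin J → ℝ) (c : ℝ) (hc : 0 < c)
    (hframe : ∀ x ∈ Set.Icc (0 : ℝ) lamMax,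
      c ≤ h x ^ 2 + ∑ τ, g (t τ * x) ^ 2) :
    (∀ f : Fin N → ℝ,
      c * ∑ n, f n ^ 2 ≤
        (∑ n, (specApply lam chi h f n) ^ 2) +
          ∑ τ, ∑ n, (specApply lam chi (fun x => g (t τ * x)) f n) ^ 2) ∧
    Function.Injective (fun f : Fin N → ℝ =>
      (specApply lam chi h f,
        fun τ : Fin J => specApply lam chi (fun x => g (t τ * x)) f)) := by
  have lower : ∀ f : Fin N → ℝ,
      c * ∑ n, f n ^ 2 ≤
        (∑ n, (specApply lam chi h f n) ^ 2) +
          ∑ τ, ∑ n, (specApply lam chi (fun x => g (t τ * x)) f n) ^ 2 := by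
    intro f
    have hrw : (∑ n, (specApply lam chi h f n) ^ 2) +
          ∑ τ, ∑ n, (specApply lam chi (fun x => g (t τ * x)) f n) ^ 2
        = ∑ l, (h (lam l) ^ 2 + ∑ τ, g (t τ * lam l) ^ 2) * (chi l ⬝ᵥ f)^2 := by
      rw [spec_norm lam chi horth h f]
      simp_rw [spec_norm lam chi horth _ f]
      rw [Finset.sum_comm (γ := Fin J)]
      rw [← Finset.sum_add_distrib]
      exact Finset.sum_congr rfl fun l _ => by rw [add_mul, Finset.sum_mul]
    rw [hrw, ← parseval chi horth f, Finset.mul_sum]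
    refine Finset.sum_le_sum fun l _ => ?_
    exact mul_le_mul_of_nonneg_right (hframe _ (hspec l)) (sq_nonneg _)
  refine ⟨lower, ?_⟩
  intro f f' hff
  have hlin : ∀ φ : ℝ → ℝ, specApply lam chi φ (f - f')
      = specApply lam chi φ f - specApply lam chi φ f' := by
    intro φ; funext n
    simp only [specApply, Pi.sub_apply, ← Finset.sum_sub_distrib, dotProduct_sub]
    exact Finset.sum_congr rfl fun l _ => by ring
  have h1 := congrArg Prod.fst hff
  have h2 := congrArg Prod.snd hff
  simp only at h1 h2
  have := lower (f - f')
  rw [hlin, h1, sub_self] at this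
  have hz : ∀ τ : Fin J, specApply lam chi (fun x => g (t τ * x)) (f - f') = 0 := by
    intro τ; rw [hlin, congrFun h2 τ, sub_self]
  simp only [hz, Pi.zero_apply] at this
  simp only [ne_eq, OfNat.ofNat_ne_zero, not_false_eq_true, zero_pow,
    Finset.sum_const_zero, add_zero] at this
  have hS0 : ∑ n, (f - f') n ^ 2 = 0 := by
    have hnn : (0:ℝ) ≤ ∑ n, (f - f') n ^ 2 :=
      Finset.sum_nonneg fun n _ => sq_nonneg _
    nlinarith
  have : f - f' = 0 := by
    funext n
    have := (Finset.sum_eq_zero_iff_of_nonneg (fun n _ => sq_nonneg ((f - f') n))).mp hS0 n (Finset.mem_univ n)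
    exact pow_eq_zero_iff (by norm_num) |>.mp this
  exact sub_eq_zero.mp this
end

section
/- The adjoint of the SGWT satisfies a reconstruction identity: if W : ℝ^N → ℝ^{(J+1)N} is the analysis operator Wf = (h(L)f, g(t_1 L)f, …, g(t_J L)f), then Wᵀ W = G(L) where G(λ) = h(λ)² + Σ_τ g(t_τ λ)²; hence if G(λ_l) > 0 for all eigenvalues λ_l of L, then f = G(L)^{-1} Wᵀ (Wf), giving exact reconstruction. -/
open Matrix

lemma dot_specApply {N : ℕ} (lam : Fin N → ℝ) (chi : Fin N → Fin N → ℝ)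
    (horth : ∀ i j, chi i ⬝ᵥ chi j = if i = j then (1 : ℝ) else 0)
    (ψ : ℝ → ℝ) (f : Fin N → ℝ) (l : Fin N) :
    chi l ⬝ᵥ specApply lam chi ψ f = ψ (lam l) * (chi l ⬝ᵥ f) := by
  have expand : ∀ c : Fin N → ℝ,
      chi l ⬝ᵥ (fun n => ∑ k, c k * chi k n) = ∑ k, c k * (chi l ⬝ᵥ chi k) := by
    intro c
    simp only [dotProduct, Finset.mul_sum]
    rw [Finset.sum_comm]
    exact Finset.sum_congr rfl fun k _ => Finset.sum_congr rfl fun m _ => by ring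
  have e2 := expand (fun k => ψ (lam k) * (chi k ⬝ᵥ f))
  unfold specApply
  rw [e2]
  simp [horth]

lemma specApply_specApply {N : ℕ} (lam : Fin N → ℝ) (chi : Fin N → Fin N → ℝ)
    (horth : ∀ i j, chi i ⬝ᵥ chi j = if i = j then (1 : ℝ) else 0)
    (φ ψ : ℝ → ℝ) (f : Fin N → ℝ) :
    specApply lam chi φ (specApply lam chi ψ f) =
      specApply lam chi (fun x => φ x * ψ x) f := by
  funext n
  simp only [specApply]
  refine Finset.sum_congr rfl fun l _ => ?_
  rw [dot_specApply lam chi horth]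
  ring

lemma chi_complete {N : ℕ} (chi : Fin N → Fin N → ℝ)
    (horth : ∀ i j, chi i ⬝ᵥ chi j = if i = j then (1 : ℝ) else 0)
    (f : Fin N → ℝ) (n : Fin N) :
    ∑ l, (chi l ⬝ᵥ f) * chi l n = f n := by
  have h1 : (Matrix.of chi) * (Matrix.of chi)ᵀ = 1 := by
    ext i j
    simpa [Matrix.mul_apply, Matrix.transpose_apply, dotProduct,
      Matrix.one_apply] using horth i j
  have h2 : (Matrix.of chi)ᵀ * (Matrix.of chi) = 1 := mul_eq_one_comm.mp h1
  have h3 : ∀ m, ∑ l, chi l n * chi l m = if n = m then (1 : ℝ) else 0 := by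
    intro m
    have := congrFun (congrFun h2 n) m
    simpa [Matrix.mul_apply, Matrix.transpose_apply, Matrix.one_apply] using this
  calc ∑ l, (chi l ⬝ᵥ f) * chi l n
      = ∑ l, ∑ m, chi l n * chi l m * f m := by
        refine Finset.sum_congr rfl fun l _ => ?_
        simp only [dotProduct, Finset.sum_mul]
        exact Finset.sum_congr rfl fun m _ => by ring
    _ = ∑ m, (∑ l, chi l n * chi l m) * f m := by
        rw [Finset.sum_comm]
        exact Finset.sum_congr rfl fun m _ => by rw [Finset.sum_mul]
    _ = f n := by simp [h3]

theorem sgwt_adjoint_reconstruction {N J : ℕ}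
    (lam : Fin N → ℝ) (chi : Fin N → Fin N → ℝ)
    (horth : ∀ i j, chi i ⬝ᵥ chi j = if i = j then (1 : ℝ) else 0)
    (hpsd : ∀ l, 0 ≤ lam l)
    (h g : ℝ → ℝ) (t : Fin J → ℝ)
    (G : ℝ → ℝ)
    (hG : G = fun x => h x ^ 2 + ∑ τ, g (t τ * x) ^ 2) :
    (∀ f : Fin N → ℝ,
      (specApply lam chi h (specApply lam chi h f) +
          ∑ τ, specApply lam chi (fun x => g (t τ * x))
            (specApply lam chi (fun x => g (t τ * x)) f)) =
        specApply lam chi G f) ∧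
    ((∀ l, 0 < G (lam l)) → ∀ f : Fin N → ℝ,
      f = specApply lam chi (fun x => (G x)⁻¹)
        (specApply lam chi h (specApply lam chi h f) +
          ∑ τ, specApply lam chi (fun x => g (t τ * x))
            (specApply lam chi (fun x => g (t τ * x)) f))) := by
  have key : ∀ f : Fin N → ℝ,
      (specApply lam chi h (specApply lam chi h f) +
          ∑ τ, specApply lam chi (fun x => g (t τ * x))
            (specApply lam chi (fun x => g (t τ * x)) f)) =
        specApply lam chi G f := by
    intro f
    funext n
    simp only [Pi.add_apply, Finset.sum_apply,
      specApply_specApply lam chi horth]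
    simp only [specApply, hG, Finset.sum_add_distrib, add_mul, Finset.sum_mul]
    rw [Finset.sum_comm]
    congr 1
    · exact Finset.sum_congr rfl fun l _ => by ring
    · refine Finset.sum_congr rfl fun l _ => Finset.sum_congr rfl fun τ _ => by ring
  refine ⟨key, fun hGpos f => ?_⟩
  rw [key f, specApply_specApply lam chi horth]
  funext n
  have : ∀ l : Fin N, (G (lam l))⁻¹ * G (lam l) = 1 := fun l =>
    inv_mul_cancel₀ (ne_of_gt (hGpos l))
  simp only [specApply, this, one_mul]
  exact (chi_complete chi horth f n).symm
end
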